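/- Let m, n ∈ ℕ, let A : ℝ^m → ℝ^m and B : ℝ^n → ℝ^n be linear maps, and let F : ℝ^m → ℝ^n be continuously differentiable. Then the following are equivalent: (i) B(F(x)) = DF(x)(A x) for all x ∈ ℝ^m (i.e., the Lie derivative ℒ_{A,B}F vanishes identically); (ii) for every t ∈ ℝ and every x ∈ ℝ^m, F(exp(tA) x) = exp(tB)(F(x)), where exp denotes the exponential of a linear operator. -/

import Mathlib

open NormedSpace

private lemma exp_apply_inv {n : ℕ} (B : (Fin n → ℝ) →L[ℝ] (Fin n → ℝ)) (t : ℝ)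
    (y : Fin n → ℝ) : exp (t • B) (exp ((-t) • B) y) = y := by
  have hcomm : Commute (t • B) ((-t) • B) :=
    ((Commute.refl B).smul_left t).smul_right (-t)
  have h : exp (t • B) * exp ((-t) • B) = 1 := by
    letI : NormedAlgebra ℚ ((Fin n → ℝ) →L[ℝ] (Fin n → ℝ)) :=
      NormedAlgebra.restrictScalars ℚ ℝ _
    rw [← exp_add_of_commute hcomm]
    simp [← add_smul]
  rw [← ContinuousLinearMap.mul_apply, h, ContinuousLinearMap.one_apply]

private lemma hasDerivAt_exp_apply {n : ℕ} (B : (Fin n → ℝ) →L[ℝ] (Fin n → ℝ)) (t : ℝ)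
    (y : Fin n → ℝ) :
    HasDerivAt (fun s : ℝ => exp (s • B) y) (B (exp (t • B) y)) t := by
  have h := (hasDerivAt_exp_smul_const' B t).clm_apply (hasDerivAt_const t y)
  simpa [ContinuousLinearMap.mul_apply] using h

/-- For linear maps `A` on `ℝ^m`, `B` on `ℝ^n` and a continuously
differentiable map `F : ℝ^m → ℝ^n`, the Lie derivative `x ↦ B (F x) − DF(x) (A x)`
vanishes identically if and only if `F (exp (t A) x) = exp (t B) (F x)` for all `t, x`. -/
theorem stmt1 (m n : ℕ)
    (A : (Fin m → ℝ) →L[ℝ] (Fin m → ℝ)) (B : (Fin n → ℝ) →L[ℝ] (Fin n → ℝ))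
    (F : (Fin m → ℝ) → (Fin n → ℝ)) (hF : ContDiff ℝ 1 F) :
    (∀ x : Fin m → ℝ, B (F x) = fderiv ℝ F x (A x)) ↔
    (∀ (t : ℝ) (x : Fin m → ℝ),
      F (NormedSpace.exp (t • A) x) = NormedSpace.exp (t • B) (F x)) := by
  have hFd : Differentiable ℝ F := hF.differentiable one_ne_zero
  constructor
  · intro h t x
    set c : ℝ → (Fin m → ℝ) := fun s => exp (s • A) x with hc
    set g : ℝ → (Fin n → ℝ) := fun s => exp ((-s) • B) (F (c s)) with hg
    have hcder : ∀ s, HasDerivAt c (A (c s)) s := fun s => hasDerivAt_exp_apply A s x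
    have hFc : ∀ s, HasDerivAt (fun u => F (c u)) (fderiv ℝ F (c s) (A (c s))) s :=
      fun s => ((hFd (c s)).hasFDerivAt).comp_hasDerivAt s (hcder s)
    have hu : ∀ s : ℝ, HasDerivAt (fun u : ℝ => exp ((-u) • B))
        ((-1 : ℝ) • (exp ((-s) • B) * B)) s := by
      intro s
      have h1 : HasDerivAt (fun u : ℝ => -u) (-1 : ℝ) s := (hasDerivAt_id s).neg
      exact (hasDerivAt_exp_smul_const B (-s)).scomp s h1
    have hgder : ∀ s, HasDerivAt g 0 s := by
      intro s
      have hsum := (hu s).clm_apply (hFc s)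
      have hcomm : Commute B (exp ((-s) • B)) :=
        ((Commute.refl B).smul_right (-s)).exp_right
      have key : ((-1 : ℝ) • (exp ((-s) • B) * B)) (F (c s))
          + exp ((-s) • B) (fderiv ℝ F (c s) (A (c s))) = 0 := by
        rw [← h (c s), ContinuousLinearMap.smul_apply, ContinuousLinearMap.mul_apply,
          ← ContinuousLinearMap.comp_apply, ← ContinuousLinearMap.mul_def, ← hcomm.eq,
          ContinuousLinearMap.mul_apply, neg_one_smul]
        exact neg_add_cancel _
      rw [key] at hsum
      exact hsum
    have hconst : g t = g 0 :=
      is_const_of_fderiv_eq_zero (fun s => (hgder s).differentiableAt)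
        (fun s => by
          rw [(hgder s).hasFDerivAt.fderiv]
          ext v; simp) t 0
    have h0 : g 0 = F x := by simp [hg, hc]
    have h1 : exp ((-t) • B) (F (c t)) = F x := hconst.trans h0
    have h2 := congrArg (⇑(exp (t • B))) h1
    rw [exp_apply_inv B t] at h2
    exact h2
  · intro h x
    have h1 : HasDerivAt (fun t : ℝ => F (exp (t • A) x)) (fderiv ℝ F x (A x)) 0 := by
      have hc := hasDerivAt_exp_apply A 0 x
      have hx0 : exp ((0:ℝ) • A) x = x := by simp
      have hcomp := ((hFd (exp ((0:ℝ) • A) x)).hasFDerivAt).comp_hasDerivAt 0 hc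
      rw [hx0] at hcomp
      exact hcomp
    have h2 : HasDerivAt (fun t : ℝ => exp (t • B) (F x)) (B (F x)) 0 := by
      have := hasDerivAt_exp_apply B 0 (F x)
      simpa using this
    have heq : (fun t : ℝ => F (exp (t • A) x)) = fun t : ℝ => exp (t • B) (F x) :=
      funext fun t => h t x
    rw [heq] at h1
    exact h2.unique h1
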